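/- Let C be a conjugation on H and let T ∈ S_C. Then the following are equivalent: (i) C*(T) ⊆ S_C, where C*(T) denotes the smallest norm-closed star-subalgebra of B(H) containing T and the identity operator I; (ii) |T| ∈ S_C, where |T| = (T*T)^{1/2} is the positive part in the polar decomposition; (iii) T is normal, i.e., T*T = TT*. -/

import Mathlib

set_option synthInstance.maxHeartbeats 1000000
set_option maxHeartbeats 1000000

def IsConjugation {H : Type*} [NormedAddCommGroup H] [InnerProductSpace ℂ H]
    (C : H → H) : Prop :=
  (∀ x y, C (x + y) = C x + C y) ∧
  (∀ (a : ℂ) (x : H), C (a • x) = (starRingEnd ℂ a) • C x) ∧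
  (∀ x, C (C x) = x) ∧
  (∀ x y : H, (inner ℂ (C x) (C y) : ℂ) = inner ℂ y x)

/-- The set `S_C` of `C`-symmetric bounded operators: `C T C = T*`. -/
def SC {H : Type*} [NormedAddCommGroup H] [InnerProductSpace ℂ H] [CompleteSpace H]
    (C : H → H) : Set (H →L[ℂ] H) :=
  {T | ∀ x : H, C (T (C x)) = ContinuousLinearMap.adjoint T x}

/-- The Jordan product `A ∘ B = (AB + BA)/2`. -/
noncomputable def jmul {H : Type*} [NormedAddCommGroup H] [InnerProductSpace ℂ H]
    [CompleteSpace H] (A B : H →L[ℂ] H) : H →L[ℂ] H :=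
  (2 : ℂ)⁻¹ • (A * B + B * A)

section Aux

variable {H : Type*} [NormedAddCommGroup H] [InnerProductSpace ℂ H] [CompleteSpace H]
  {C : H → H}

open ContinuousLinearMap

omit [CompleteSpace H] in
lemma IsConjugation.norm_map (hC : IsConjugation C) (x : H) : ‖C x‖ = ‖x‖ := by
  rw [norm_eq_sqrt_re_inner (𝕜 := ℂ) (C x), norm_eq_sqrt_re_inner (𝕜 := ℂ) x, hC.2.2.2 x x]

omit [CompleteSpace H] in
lemma IsConjugation.map_sub (hC : IsConjugation C) (x y : H) :
    C (x - y) = C x - C y := by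
  have := hC.1 (x - y) y
  rw [sub_add_cancel] at this
  rw [this]; abel

omit [CompleteSpace H] in
lemma IsConjugation.continuous (hC : IsConjugation C) : Continuous C := by
  have : Isometry C := Isometry.of_dist_eq fun x y => by
    rw [dist_eq_norm, dist_eq_norm, ← hC.map_sub, hC.norm_map]
  exact this.continuous

lemma IsConjugation.apply_conj (hC : IsConjugation C) {A : H →L[ℂ] H} (hA : A ∈ SC C) (x : H) :
    A (C x) = C (adjoint A x) := by
  rw [← hA x, hC.2.2.1]

lemma sc_star_mem (hC : IsConjugation C) {A : H →L[ℂ] H} (hA : A ∈ SC C) :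
    star A ∈ SC C := by
  intro x
  rw [star_eq_adjoint, adjoint_adjoint]
  have := hC.apply_conj hA (C x)
  rw [hC.2.2.1 x] at this
  exact this.symm

lemma sc_one (hC : IsConjugation C) : (1 : H →L[ℂ] H) ∈ SC C := by
  intro x
  have h1 : adjoint (1 : H →L[ℂ] H) = 1 := by
    rw [← star_eq_adjoint, star_one]
  rw [h1]
  simp only [ContinuousLinearMap.one_apply]
  exact hC.2.2.1 x

lemma sc_add (hC : IsConjugation C) {A B : H →L[ℂ] H} (hA : A ∈ SC C) (hB : B ∈ SC C) :
    A + B ∈ SC C := by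
  intro x
  have h1 : adjoint (A + B) = adjoint A + adjoint B := by
    rw [← star_eq_adjoint, star_add, star_eq_adjoint, star_eq_adjoint]
  rw [h1]
  simp only [ContinuousLinearMap.add_apply]
  rw [hC.1, hA x, hB x]

lemma sc_smul (hC : IsConjugation C) {A : H →L[ℂ] H} (a : ℂ) (hA : A ∈ SC C) :
    a • A ∈ SC C := by
  intro x
  have h1 : adjoint (a • A) = (starRingEnd ℂ a) • adjoint A := by
    rw [← star_eq_adjoint, star_smul, star_eq_adjoint]
    rfl
  rw [h1]
  simp only [ContinuousLinearMap.smul_apply]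
  rw [hC.2.1, hA x]

lemma sc_mul (hC : IsConjugation C) {A B : H →L[ℂ] H} (hA : A ∈ SC C) (hB : B ∈ SC C)
    (hcomm : adjoint A * adjoint B = adjoint B * adjoint A) :
    A * B ∈ SC C := by
  intro x
  have hadj : adjoint (A * B) = adjoint A * adjoint B := by
    rw [← star_eq_adjoint, star_mul, star_eq_adjoint, star_eq_adjoint, ← hcomm]
  rw [hadj]
  have h1 : (A * B) (C x) = A (C (adjoint B x)) := by
    rw [ContinuousLinearMap.mul_apply, hC.apply_conj hB]
  rw [h1]
  exact hA (adjoint B x)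

lemma sc_closed (hC : IsConjugation C) : IsClosed (SC C) := by
  have : SC C = ⋂ x : H, {A : H →L[ℂ] H | C (A (C x)) = adjoint A x} := by
    ext A
    simp only [Set.mem_iInter, Set.mem_setOf_eq]
    rfl
  rw [this]
  refine isClosed_iInter fun x => isClosed_eq ?_ ?_
  · exact hC.continuous.comp ((ContinuousLinearMap.apply ℂ H (C x)).continuous)
  · exact (ContinuousLinearMap.apply ℂ H x).continuous.comp
      (ContinuousLinearMap.adjoint (E := H) (F := H)).continuous

end Aux

/-- For `T ∈ S_C`, TFAE: (i) the smallest norm-closed star-subalgebra of `B(H)`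
containing `T` and `I` is contained in `S_C`; (ii) `|T| ∈ S_C` (phrased via the
unique positive square root of `T*T`); (iii) `T` is normal. -/
theorem stmt11 {H : Type*} [NormedAddCommGroup H] [InnerProductSpace ℂ H] [CompleteSpace H]
    [TopologicalSpace.SeparableSpace H] (hdim : ¬ FiniteDimensional ℂ H)
    (C : H → H) (hC : IsConjugation C) (T : H →L[ℂ] H) (hT : T ∈ SC C) :
    List.TFAE [
      ∀ A : H →L[ℂ] H,
        (∀ S : StarSubalgebra ℂ (H →L[ℂ] H), IsClosed (S : Set (H →L[ℂ] H)) → T ∈ S → A ∈ S) →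
        A ∈ SC C,
      ∀ R : H →L[ℂ] H, R.IsPositive → R * R = star T * T → R ∈ SC C,
      star T * T = T * star T] := by
  open ContinuousLinearMap in
  have hT' : star T ∈ SC C := sc_star_mem hC hT
  have hinv := hC.2.2.1
  have hinner := hC.2.2.2
  -- the key pointwise computation: `C ((T* T) (C x)) = (T T*) x`
  have key : ∀ x, C ((star T * T) (C x)) = (T * star T) x := by
    intro x
    have h1 : (star T * T) (C x) = star T (C (adjoint T x)) := by
      rw [ContinuousLinearMap.mul_apply, hC.apply_conj hT]
    rw [h1, hT' (adjoint T x)]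
    simp [star_eq_adjoint, adjoint_adjoint]
  tfae_have 1 → 3 := by
    intro h1
    have hmem : star T * T ∈ SC C :=
      h1 _ (fun S _ hTS => mul_mem (star_mem hTS) hTS)
    ext x
    have h2 := hmem x
    rw [key x] at h2
    have h3 : adjoint (star T * T) = star T * T := by
      rw [← star_eq_adjoint, star_mul, star_star]
    rw [h3] at h2
    exact h2.symm
  tfae_have 3 → 1 := by
    intro h3 A hA
    haveI : IsStarNormal T := ⟨h3⟩
    set E := StarAlgebra.elemental ℂ T with hE
    have hcomm : ∀ P Q : H →L[ℂ] H, P ∈ E → Q ∈ E → P * Q = Q * P := by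
      intro P Q hP hQ
      have := mul_comm (⟨P, hP⟩ : E) (⟨Q, hQ⟩ : E)
      exact congrArg Subtype.val this
    let S : StarSubalgebra ℂ (H →L[ℂ] H) :=
      { carrier := (E : Set (H →L[ℂ] H)) ∩ SC C
        mul_mem' := by
          rintro P Q ⟨hPE, hPS⟩ ⟨hQE, hQS⟩
          refine ⟨mul_mem hPE hQE, sc_mul hC hPS hQS ?_⟩
          rw [← star_eq_adjoint, ← star_eq_adjoint]
          exact hcomm _ _ (star_mem hPE) (star_mem hQE)
        add_mem' := by
          rintro P Q ⟨hPE, hPS⟩ ⟨hQE, hQS⟩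
          exact ⟨add_mem hPE hQE, sc_add hC hPS hQS⟩
        algebraMap_mem' := by
          intro r
          refine ⟨algebraMap_mem E r, ?_⟩
          rw [Algebra.algebraMap_eq_smul_one]
          exact sc_smul hC r (sc_one hC)
        star_mem' := by
          rintro P ⟨hPE, hPS⟩
          exact ⟨star_mem hPE, sc_star_mem hC hPS⟩ }
    have hSclosed : IsClosed (S : Set (H →L[ℂ] H)) :=
      (StarAlgebra.elemental.isClosed ℂ T).inter (sc_closed hC)
    have hTS : T ∈ S := ⟨StarAlgebra.elemental.self_mem ℂ T, hT⟩
    exact (hA S hSclosed hTS).2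
  tfae_have 3 → 2 := by
    intro h3 R hRpos hRsq
    have hRsa : adjoint R = R := isSelfAdjoint_iff'.mp hRpos.isSelfAdjoint
    have hRinner : ∀ u v : H, (inner ℂ (R u) v : ℂ) = inner ℂ u (R v) := fun u v => by
      nth_rewrite 1 [← hRsa]
      exact ContinuousLinearMap.adjoint_inner_left R v u
    -- construct the operator `x ↦ C (R (C x))`
    let L : H →ₗ[ℂ] H :=
      { toFun := fun x => C (R (C x))
        map_add' := fun x y => by
          show C (R (C (x + y))) = C (R (C x)) + C (R (C y))
          rw [hC.1, R.map_add, hC.1]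
        map_smul' := fun a x => by
          show C (R (C (a • x))) = a • C (R (C x))
          rw [hC.2.1, R.map_smul, hC.2.1]
          simp }
    have hLbound : ∀ x, ‖L x‖ ≤ ‖R‖ * ‖x‖ := fun x => by
      show ‖C (R (C x))‖ ≤ ‖R‖ * ‖x‖
      rw [hC.norm_map (R (C x))]
      calc ‖R (C x)‖ ≤ ‖R‖ * ‖C x‖ := R.le_opNorm (C x)
        _ = ‖R‖ * ‖x‖ := by rw [hC.norm_map x]
    let S : H →L[ℂ] H := L.mkContinuous ‖R‖ hLbound
    have hSapp : ∀ x, S x = C (R (C x)) := fun _ => rfl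
    -- `S` is self-adjoint
    have hSinner : ∀ x y : H, (inner ℂ (S x) y : ℂ) = inner ℂ x (S y) := by
      intro x y
      have e1 := hinner (R (C x)) (C y)
      rw [hinv y] at e1
      have e2 := hinner (C (R (C y))) x
      rw [hinv (R (C y))] at e2
      calc (inner ℂ (S x) y : ℂ) = inner ℂ (C y) (R (C x)) := e1
        _ = inner ℂ (R (C y)) (C x) := (hRinner (C y) (C x)).symm
        _ = inner ℂ x (S y) := e2
    have hSsa : IsSelfAdjoint S := by
      rw [isSelfAdjoint_iff']
      exact ((eq_adjoint_iff S S).mpr fun x y => hSinner x y).symm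
    -- `S` is positive
    have hSpos : S.IsPositive := by
      refine isPositive_def'.mpr ⟨hSsa, fun x => ?_⟩
      have e1 := hinner (R (C x)) (C x)
      rw [hinv x] at e1
      have e3 : (inner ℂ (S x) x : ℂ) = inner ℂ (C x) (R (C x)) := e1
      rw [ContinuousLinearMap.reApplyInnerSelf, e3, ← inner_conj_symm]
      rw [RCLike.re_eq_complex_re, Complex.conj_re]
      exact hRpos.2 (C x)
    -- `S * S = star T * T`
    have hSsq : S * S = star T * T := by
      ext x
      calc (S * S) x = C (R (C (C (R (C x))))) := rfl
        _ = C (R (R (C x))) := by rw [hinv (R (C x))]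
        _ = C ((star T * T) (C x)) := by
            rw [← hRsq, ContinuousLinearMap.mul_apply]
        _ = (T * star T) x := key x
        _ = (star T * T) x := by rw [← h3]
    -- uniqueness of positive square roots
    have hR0 : (0 : H →L[ℂ] H) ≤ R := (ContinuousLinearMap.nonneg_iff_isPositive R).mpr hRpos
    have hS0 : (0 : H →L[ℂ] H) ≤ S := (ContinuousLinearMap.nonneg_iff_isPositive S).mpr hSpos
    have hSR : S = R := by
      rw [← CFC.sqrt_unique hSsq hS0, ← CFC.sqrt_unique hRsq hR0]
    intro x
    rw [hRsa]
    calc C (R (C x)) = S x := (hSapp x).symm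
      _ = R x := by rw [hSR]
  tfae_have 2 → 3 := by
    intro h2
    have h0 : (0 : H →L[ℂ] H) ≤ star T * T := star_mul_self_nonneg T
    set R := CFC.sqrt (star T * T) with hRdef
    have hR0 : (0 : H →L[ℂ] H) ≤ R := CFC.sqrt_nonneg _
    have hRsq : R * R = star T * T := CFC.sqrt_mul_sqrt_self _ h0
    have hRS : R ∈ SC C :=
      h2 R ((ContinuousLinearMap.nonneg_iff_isPositive R).mp hR0) hRsq
    have hRsa : adjoint R = R :=
      isSelfAdjoint_iff'.mp ((ContinuousLinearMap.nonneg_iff_isPositive R).mp hR0).isSelfAdjoint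
    ext x
    have h1 : C ((star T * T) (C x)) = (star T * T) x := by
      have e1 : (star T * T) (C x) = R (C (R x)) := by
        rw [← hRsq, ContinuousLinearMap.mul_apply, hC.apply_conj hRS, hRsa]
      rw [e1, hRS (R x), hRsa, ← ContinuousLinearMap.mul_apply, hRsq]
    exact h1.symm.trans (key x)
  tfae_finish
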